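/- Symmetry / double transform property (H5): if g = (g_0, …, g_{N−1}) has entries in K and G is its FFHT, then the FFHT of G equals N·g; that is, for every index i, ∑_{k=0}^{N−1} G_k·cas_i(k) = (N : K)·g_i. -/

import Mathlib

open scoped BigOperators

/-- The finite field cosine: `cos_k(∠α^i) = (α^{ik} + α^{-ik})/2`,
where `α^{-ik}` denotes `(α⁻¹)^{ik}`. -/
noncomputable def fcos {K : Type*} [Field K] (α : Kˣ) (k i : ℤ) : K :=
  (((α ^ (i * k) : Kˣ) : K) + ((α⁻¹ ^ (i * k) : Kˣ) : K)) / 2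

/-- The finite field sine: `sin_k(∠α^i) = (α^{ik} - α^{-ik})/(2j)`. -/
noncomputable def fsin {K : Type*} [Field K] (α : Kˣ) (j : K) (k i : ℤ) : K :=
  (((α ^ (i * k) : Kˣ) : K) - ((α⁻¹ ^ (i * k) : Kˣ) : K)) / (2 * j)

/-- The finite field `cas` function: `cas_k(∠α^i) = cos_k(∠α^i) + sin_k(∠α^i)`. -/
noncomputable def fcas {K : Type*} [Field K] (α : Kˣ) (j : K) (k i : ℤ) : K :=
  fcos α k i + fsin α j k i

/-- The finite field Hartley transform of a vector `v` indexed by `ZMod N`: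
`V_k = ∑_{i=0}^{N-1} v_i · cas_k(∠α^i)`. -/
noncomputable def ffht {K : Type*} [Field K] (α : Kˣ) (j : K) {N : ℕ} [NeZero N]
    (v : ZMod N → K) (k : ZMod N) : K :=
  ∑ i : ZMod N, v i * fcas α j (k.val : ℤ) (i.val : ℤ)

lemma geomS {K : Type*} [Field K] (α : Kˣ) (N : ℕ) [NeZero N] (hα : orderOf α = N) (n : ℤ) :
    (∑ k : ZMod N, (α : K) ^ (n * (k.val : ℤ))) = if (N : ℤ) ∣ n then (N : K) else 0 := by
  have hterm : ∀ k : ZMod N, (α : K) ^ (n * (k.val : ℤ)) = ((α : K) ^ n) ^ k.val := by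
    intro k; rw [← zpow_natCast ((α : K) ^ n), ← zpow_mul]
  rw [Finset.sum_congr rfl fun k _ => hterm k]
  have hre : ∑ k : ZMod N, ((α : K) ^ n) ^ k.val = ∑ k ∈ Finset.range N, ((α : K) ^ n) ^ k := by
    refine Finset.sum_nbij' (fun k => k.val) (fun m => (m : ZMod N)) ?_ ?_ ?_ ?_ ?_
    · intro a _; exact Finset.mem_range.mpr (ZMod.val_lt a)
    · intro a _; exact Finset.mem_univ _
    · intro a _; simp [ZMod.natCast_val, ZMod.cast_id]
    · intro a ha; exact ZMod.val_cast_of_lt (Finset.mem_range.mp ha)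
    · intro a _; rfl
  rw [hre]
  have hcoe : ((α ^ n : Kˣ) : K) = (α : K) ^ n := by push_cast; rfl
  by_cases hdvd : (N : ℤ) ∣ n
  · have h1 : α ^ n = 1 := orderOf_dvd_iff_zpow_eq_one.mp (by rwa [hα])
    have h2 : (α : K) ^ n = 1 := by rw [← hcoe, h1]; rfl
    simp [h2, hdvd]
  · have hy1 : (α : K) ^ n ≠ 1 := by
      intro h
      apply hdvd
      rw [← hα]
      refine orderOf_dvd_iff_zpow_eq_one.mpr (Units.ext ?_)
      rw [hcoe, h]; simp
    have hxN : (α : K) ^ (N : ℕ) = 1 := by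
      have h1 := pow_orderOf_eq_one α
      rw [hα] at h1
      calc (α : K) ^ N = ((α ^ N : Kˣ) : K) := by push_cast; rfl
        _ = 1 := by rw [h1]; rfl
    have hyN : ((α : K) ^ n) ^ N = 1 := by
      rw [← zpow_natCast ((α:K)^n), ← zpow_mul, mul_comm, zpow_mul, zpow_natCast, hxN, one_zpow]
    rw [geom_sum_eq hy1, hyN, sub_self, zero_div, if_neg hdvd]

lemma alg_key {K : Type*} [Field K] (j A B Ai Bi : K) (hj : j ^ 2 = -1) (h2 : (2:K) ≠ 0)
    (hjne : j ≠ 0) :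
    ((A + Ai)/2 + (A - Ai)/(2*j)) * ((B + Bi)/2 + (B - Bi)/(2*j))
      = (A*Bi + B*Ai)/2 + j*(Ai*Bi - A*B)/2 := by
  field_simp
  linear_combination (A*B*(1+2*j) - A*Bi - Ai*B + Ai*Bi*(1-2*j)) * hj

lemma fcas_mul_expand {K : Type*} [Field K] (α : Kˣ) (j : K) (hj : j ^ 2 = -1)
    (h2 : (2 : K) ≠ 0) (hjne : j ≠ 0) (k m i : ℤ) :
    fcas α j k m * fcas α j i k =
      ((α : K) ^ ((m - i) * k) + (α : K) ^ ((i - m) * k)) / 2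
        + j * ((α : K) ^ (-((m + i) * k)) - (α : K) ^ ((m + i) * k)) / 2 := by
  have hx : (α : K) ≠ 0 := α.ne_zero
  have hc : ∀ e : ℤ, ((α ^ e : Kˣ) : K) = (α : K) ^ e := by intro e; push_cast; rfl
  have hci : ∀ e : ℤ, ((α⁻¹ ^ e : Kˣ) : K) = ((α : K) ^ e)⁻¹ := by
    intro e; push_cast; rw [inv_zpow]
  unfold fcas fcos fsin
  rw [hc, hc, hci, hci]
  rw [alg_key j _ _ _ _ hj h2 hjne]
  rw [show (m - i) * k = m * k - k * i by ring, show (i - m) * k = k * i - m * k by ring,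
    show -((m + i) * k) = -(m * k) + -(k * i) by ring, show (m + i) * k = m * k + k * i by ring]
  rw [zpow_sub₀ hx, zpow_sub₀ hx, zpow_add₀ hx, zpow_add₀ hx, zpow_neg, zpow_neg]
  ring

theorem ffht_aux_sum (p : ℕ) (hp : p.Prime) (hpodd : Odd p)
    (K : Type*) [Field K] [CharP K p] (j : K) (hj : j ^ 2 = -1)
    (α : Kˣ) (N : ℕ) [NeZero N] (hα : orderOf α = N) (i m : ZMod N) :
    (∑ k : ZMod N, fcas α j (k.val : ℤ) (m.val : ℤ) * fcas α j (i.val : ℤ) (k.val : ℤ))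
      = if m = i then (N : K) else 0 := by
  have h2 : (2 : K) ≠ 0 := by
    have hp2 : p ≠ 2 := by rintro rfl; exact (Nat.not_odd_iff_even.mpr even_two) hpodd
    have : ¬ (p ∣ 2) := fun h => hp2 ((Nat.prime_dvd_prime_iff_eq hp Nat.prime_two).mp h)
    simpa using (CharP.cast_eq_zero_iff K p 2).not.mpr this
  have hjne : j ≠ 0 := by
    intro h; rw [h] at hj; simp at hj
  rw [Finset.sum_congr rfl fun (k : ZMod N) _ =>
    fcas_mul_expand α j hj h2 hjne (k.val : ℤ) (m.val : ℤ) (i.val : ℤ)]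
  have hdm : ((N : ℤ) ∣ ((m.val : ℤ) - (i.val : ℤ))) ↔ m = i := by
    rw [← ZMod.intCast_zmod_eq_zero_iff_dvd]
    push_cast
    rw [ZMod.natCast_val, ZMod.natCast_val, ZMod.cast_id, ZMod.cast_id, sub_eq_zero]
  have e1 : ∀ k : ZMod N, ((α : K) ^ (((m.val:ℤ) - i.val) * k.val) + (α : K) ^ (((i.val:ℤ) - m.val) * k.val)) / 2
      + j * ((α : K) ^ (-(((m.val:ℤ) + i.val) * k.val)) - (α : K) ^ (((m.val:ℤ) + i.val) * k.val)) / 2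
      = ((α : K) ^ (((m.val:ℤ) - i.val) * (k.val:ℤ)) + (α : K) ^ ((-((m.val:ℤ) - i.val)) * (k.val:ℤ))) / 2
      + j * ((α : K) ^ ((-((m.val:ℤ) + i.val)) * (k.val:ℤ)) - (α : K) ^ (((m.val:ℤ) + i.val) * (k.val:ℤ))) / 2 := by
    intro k; ring_nf
  rw [Finset.sum_congr rfl fun k _ => e1 k]
  have S := geomS α N hα
  have expand : ∀ k : ZMod N, (((α : K) ^ (((m.val:ℤ) - i.val) * (k.val:ℤ)) + (α : K) ^ ((-((m.val:ℤ) - i.val)) * (k.val:ℤ))) / 2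
      + j * ((α : K) ^ ((-((m.val:ℤ) + i.val)) * (k.val:ℤ)) - (α : K) ^ (((m.val:ℤ) + i.val) * (k.val:ℤ))) / 2)
      = (α : K) ^ (((m.val:ℤ) - i.val) * (k.val:ℤ)) / 2 + (α : K) ^ ((-((m.val:ℤ) - i.val)) * (k.val:ℤ)) / 2
      + (j/2 * (α : K) ^ ((-((m.val:ℤ) + i.val)) * (k.val:ℤ)) - j/2 * (α : K) ^ (((m.val:ℤ) + i.val) * (k.val:ℤ))) := by
    intro k; ring
  rw [Finset.sum_congr rfl fun k _ => expand k]
  rw [Finset.sum_add_distrib, Finset.sum_add_distrib, Finset.sum_sub_distrib,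
    ← Finset.sum_div, ← Finset.sum_div, ← Finset.mul_sum, ← Finset.mul_sum,
    S, S, S, S]
  simp only [dvd_neg, sub_self, add_zero]
  split_ifs with hc hc2 hc2
  · field_simp
    ring
  · exact absurd (hdm.mp hc) hc2
  · exact absurd (hdm.mpr hc2) hc
  · simp


/-- H5, symmetry: the FFHT of the FFHT of `g` is `N·g`:
`∑_{k=0}^{N-1} G_k · cas_i(k) = N·g_i`. -/
theorem ffht_double_transform (p : ℕ) (hp : p.Prime) (hpodd : Odd p)
    (K : Type*) [Field K] [CharP K p] (j : K) (hj : j ^ 2 = -1)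
    (α : Kˣ) (N : ℕ) [NeZero N] (hα : orderOf α = N)
    (g G : ZMod N → K) (hG : ∀ k, G k = ffht α j g k) (i : ZMod N) :
    (∑ k : ZMod N, G k * fcas α j (i.val : ℤ) (k.val : ℤ)) = (N : K) * g i := by
  simp only [hG, ffht]
  calc ∑ k : ZMod N, (∑ m : ZMod N, g m * fcas α j (k.val : ℤ) (m.val : ℤ))
        * fcas α j (i.val : ℤ) (k.val : ℤ)
      = ∑ k : ZMod N, ∑ m : ZMod N,
          g m * (fcas α j (k.val : ℤ) (m.val : ℤ) * fcas α j (i.val : ℤ) (k.val : ℤ)) := by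
        refine Finset.sum_congr rfl fun k _ => ?_
        rw [Finset.sum_mul]
        exact Finset.sum_congr rfl fun m _ => by ring
    _ = ∑ m : ZMod N, g m *
          ∑ k : ZMod N, fcas α j (k.val : ℤ) (m.val : ℤ) * fcas α j (i.val : ℤ) (k.val : ℤ) := by
        rw [Finset.sum_comm]
        exact Finset.sum_congr rfl fun m _ => (Finset.mul_sum _ _ _).symm
    _ = ∑ m : ZMod N, g m * (if m = i then (N : K) else 0) := by
        exact Finset.sum_congr rfl fun m _ => by
          rw [ffht_aux_sum p hp hpodd K j hj α N hα i m]
    _ = (N : K) * g i := by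
        simp [mul_ite, Finset.sum_ite_eq', mul_comm]
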